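/- Let B, β, v, w, ρ, γ ≥ 0, μ > 0, and N₀ > 0. Every complex root of the characteristic polynomial of the 5×5 real matrix J_DFE has negative real part if and only if R₀ < 1, where R₀ = Bβ/(N₀(v+μ)(w+μ)). (This expresses Theorem 3.1: the disease-free equilibrium is locally asymptotically stable if and only if R₀ < 1.) -/

import Mathlib

open Polynomial

set_option maxHeartbeats 1000000 in
private lemma charpoly_fact (a k b c m w v g : ℝ) :
    (!![-a, -k, 0, 0, 0;
        0, k - b, 0, 0, 0;
        0, w, -c, 0, 0;
        v, 0, 0, -m, 0;
        0, 0, g, 0, -m] : Matrix (Fin 5) (Fin 5) ℝ).charpoly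
    = (X + C a) * (X - C (k - b)) * (X + C c) * (X + C m) ^ 2 := by
  have h : Matrix.charmatrix (!![-a, -k, 0, 0, 0;
        0, k - b, 0, 0, 0;
        0, w, -c, 0, 0;
        v, 0, 0, -m, 0;
        0, 0, g, 0, -m] : Matrix (Fin 5) (Fin 5) ℝ)
      = !![X + C a, C k, 0, 0, 0;
        0, X - C (k - b), 0, 0, 0;
        0, -C w, X + C c, 0, 0;
        -C v, 0, 0, X + C m, 0;
        0, 0, -C g, 0, X + C m] := by
    ext i j : 2
    fin_cases i <;> fin_cases j <;>
      simp [Matrix.charmatrix_apply, Matrix.diagonal, Matrix.vecHead, Matrix.vecTail] <;> ring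
  rw [Matrix.charpoly, h]
  simp [Matrix.det_succ_row_zero, Fin.sum_univ_succ, Fin.succAbove,
    Matrix.vecHead, Matrix.vecTail]
  ring

/-- **Theorem 3.1.** The disease-free equilibrium of the SAIVRD model is locally
asymptotically stable iff `R₀ < 1`: every complex root of the characteristic
polynomial of the Jacobian `J_DFE` has negative real part iff
`R₀ = Bβ/(N₀(v+μ)(w+μ)) < 1`. -/
theorem DFE_stable_iff_R0_lt_one
    (B β v w ρ γ μ N₀ : ℝ) (hB : 0 ≤ B) (hβ : 0 ≤ β) (hv : 0 ≤ v) (hw : 0 ≤ w)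
    (hρ : 0 ≤ ρ) (hγ : 0 ≤ γ) (hμ : 0 < μ) (hN₀ : 0 < N₀) :
    let J : Matrix (Fin 5) (Fin 5) ℝ :=
      !![-(v + μ), -(B * β / (N₀ * (v + μ))), 0, 0, 0;
         0, B * β / (N₀ * (v + μ)) - (w + μ), 0, 0, 0;
         0, w, -(ρ + γ + μ), 0, 0;
         v, 0, 0, -μ, 0;
         0, 0, γ, 0, -μ]
    ((∀ z : ℂ, (J.charpoly.map (algebraMap ℝ ℂ)).IsRoot z → z.re < 0) ↔
      B * β / (N₀ * (v + μ) * (w + μ)) < 1) := by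
  intro J
  set a : ℝ := v + μ with ha
  set k : ℝ := B * β / (N₀ * (v + μ)) with hk
  set b : ℝ := w + μ with hb
  set c : ℝ := ρ + γ + μ with hc
  have ha0 : 0 < a := by positivity
  have hb0 : 0 < b := by positivity
  have hc0 : 0 < c := by positivity
  have hk0 : 0 ≤ k := by positivity
  have hcp : J.charpoly = (X + C a) * (X - C (k - b)) * (X + C c) * (X + C μ) ^ 2 :=
    charpoly_fact a k b c μ w v γ
  have hR : B * β / (N₀ * (v + μ) * (w + μ)) = k / b := by
    rw [hk, hb, div_div]
  have hmap : J.charpoly.map (algebraMap ℝ ℂ) =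
      (X + C (a : ℂ)) * (X - C ((k - b : ℝ) : ℂ)) * (X + C (c : ℂ)) * (X + C (μ : ℂ)) ^ 2 := by
    rw [hcp]
    simp [Polynomial.map_mul, Polynomial.map_pow, Polynomial.map_add, Polynomial.map_sub]
  have hroot : ∀ z : ℂ, (J.charpoly.map (algebraMap ℝ ℂ)).IsRoot z ↔
      (z = -(a : ℂ) ∨ z = ((k - b : ℝ) : ℂ) ∨ z = -(c : ℂ) ∨ z = -(μ : ℂ)) := by
    intro z
    rw [hmap, IsRoot.def]
    simp only [eval_mul, eval_pow, eval_add, eval_sub, eval_X, eval_C, mul_eq_zero,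
      sq_eq_zero_iff, sub_eq_zero, add_eq_zero_iff_eq_neg]
    simp only [or_assoc]
  rw [hR, div_lt_one hb0]
  constructor
  · intro H
    have h1 : (((k - b : ℝ) : ℂ)).re < 0 := by
      apply H
      rw [hroot]
      exact Or.inr (Or.inl rfl)
    simpa using by linarith [show (k - b : ℝ) < 0 by simpa using h1]
  · intro hkb z hz
    rw [hroot] at hz
    rcases hz with h | h | h | h <;> rw [h] <;> simp <;> linarith
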